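/- arXiv:math/9906201 — 3 statements merged into one kernel-verified Lean document; each statement's English description precedes it below -/
import Mathlib

section
/- Let 0 → I → A →^π B → 0 be an extension of C*-algebras and let e, f be projections in A. Then π(e) is Cuntz subequivalent to π(f) in B if and only if there exists a positive element x ∈ I such that e is Cuntz subequivalent to f ⊕ x in M₂(A). -/
set_option maxHeartbeats 1000000

open Filter Topology

section CuntzHelpers

lemma commute_cfc' {C : Type*} [CStarAlgebra C] {a b : C} (ha : IsSelfAdjoint a)
    (hab : Commute b a) (f : ℝ → ℝ) : Commute b (cfc f a) := by
  by_cases hf : ContinuousOn f (spectrum ℝ a)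
  · rw [cfc_apply f a ha hf]
    let T : Subalgebra ℝ C(spectrum ℝ a, ℝ) :=
      (Subalgebra.centralizer ℝ {b}).comap (cfcHom ha (R := ℝ)).toAlgHom
    have hmem : ∀ g, g ∈ T ↔ Commute b (cfcHom ha g) := by
      intro g
      constructor
      · intro hg
        have := (Subalgebra.mem_centralizer_iff ℝ).mp hg b rfl
        exact this
      · intro hg
        exact (Subalgebra.mem_centralizer_iff ℝ).mpr (by rintro c rfl; exact hg)
    have hT : IsClosed (T : Set C(spectrum ℝ a, ℝ)) := by
      have : (T : Set C(spectrum ℝ a, ℝ)) =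
          (cfcHom ha (R := ℝ)) ⁻¹' {x | b * x = x * b} := by
        ext g
        exact hmem g
      rw [this]
      exact (isClosed_eq (continuous_const.mul continuous_id)
        (continuous_id.mul continuous_const)).preimage (cfcHom_continuous ha)
    have hpoly : polynomialFunctions (spectrum ℝ a) ≤ T := by
      rw [polynomialFunctions.eq_adjoin_X]
      apply Algebra.adjoin_le
      rintro g hg
      rw [Set.mem_singleton_iff] at hg
      subst hg
      rw [SetLike.mem_coe, hmem]
      have h1 : (Polynomial.toContinuousMapOnAlgHom (spectrum ℝ a) Polynomial.X) =
          ((ContinuousMap.id ℝ).restrict (spectrum ℝ a)) := by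
        ext z; simp
      rw [h1, cfcHom_id ha]
      exact hab
    have hTop : (⊤ : Subalgebra ℝ C(spectrum ℝ a, ℝ)) ≤ T := by
      rw [← polynomialFunctions.topologicalClosure (spectrum ℝ a)]
      exact Subalgebra.topologicalClosure_minimal hpoly hT
    exact (hmem _).mp (hTop Algebra.mem_top)
  · rw [cfc_apply_of_not_continuousOn a hf]
    exact Commute.zero_right b

lemma unified_corner {C : Type*} [CStarAlgebra C] [PartialOrder C] [StarOrderedRing C]
    {e c : C} (hee : e * e = e)
    (hce : e * c = c) (hec : c * e = c)
    (hu : IsUnit (1 - e + c)) (hupos : 0 ≤ 1 - e + c) :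
    ∃ y : C, star y = y ∧ Commute e y ∧ y * c * y = e := by
  set u := 1 - e + c with hu_def
  have heu : e * u = c := by
    rw [hu_def, mul_add, mul_sub, mul_one, hee, hce, sub_self, zero_add]
  have hue : u * e = c := by
    rw [hu_def, add_mul, sub_mul, one_mul, hee, hec, sub_self, zero_add]
  have hcomm : Commute e u := by rw [Commute, SemiconjBy, heu, hue]
  obtain ⟨U, hU⟩ := hu
  set iu : C := ↑U⁻¹ with hiu_def
  have hiu_mul : iu * u = 1 := by rw [hiu_def, ← hU]; exact U.inv_mul
  have hmul_iu : u * iu = 1 := by rw [hiu_def, ← hU]; exact U.mul_inv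
  have hu_sa : IsSelfAdjoint u := .of_nonneg hupos
  have hiu_sa : IsSelfAdjoint iu := by
    have h1 : star iu * u = 1 := by
      have := congrArg star hmul_iu
      rwa [star_mul, star_one, hu_sa.star_eq] at this
    calc star iu = star iu * (u * iu) := by rw [hmul_iu, mul_one]
    _ = (star iu * u) * iu := by rw [mul_assoc]
    _ = iu := by rw [h1, one_mul]
  have hiu_nonneg : 0 ≤ iu := by
    have := star_left_conjugate_nonneg hupos iu
    rwa [hiu_sa.star_eq, mul_assoc, hmul_iu, mul_one] at this
  set y : C := cfc Real.sqrt iu with hy_def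
  have hy_sa : IsSelfAdjoint y := cfc_predicate Real.sqrt iu
  have hyy : y * y = iu := by
    rw [hy_def, ← cfc_mul Real.sqrt Real.sqrt iu]
    have h2 : ∀ s ∈ spectrum ℝ iu, Real.sqrt s * Real.sqrt s = s := fun s hs =>
      Real.mul_self_sqrt (spectrum_nonneg_of_nonneg hiu_nonneg hs)
    rw [cfc_congr h2, cfc_id' ℝ iu]
  have heiu : Commute e iu := by
    have h3 : Commute e (U : C) := hU.symm ▸ hcomm
    exact h3.units_inv_right
  have huiu : Commute u iu := by
    have h3 : Commute u (U : C) := hU.symm ▸ (Commute.refl u)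
    exact h3.units_inv_right
  have hey : Commute e y := commute_cfc' hiu_sa heiu Real.sqrt
  have huy : Commute u y := commute_cfc' hiu_sa huiu Real.sqrt
  refine ⟨y, hy_sa.star_eq, hey, ?_⟩
  have hyuy : y * u * y = 1 := by
    rw [mul_assoc, huy.eq, ← mul_assoc, hyy, hiu_mul]
  calc y * c * y = y * (u * e) * y := by rw [hue]
  _ = (y * u) * (e * y) := by rw [← mul_assoc, mul_assoc (y*u)]
  _ = (y * u) * (y * e) := by rw [hey.eq]
  _ = (y * u * y) * e := by rw [mul_assoc, mul_assoc, mul_assoc]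
  _ = e := by rw [hyuy, one_mul]

variable {A : Type*} [NonUnitalCStarAlgebra A]

lemma entry00 (M : Matrix (Fin 2) (Fin 2) A) (d₀ d₁ : A) :
    (M * Matrix.diagonal ![d₀, d₁] * star M) 0 0 =
      M 0 0 * d₀ * star (M 0 0) + M 0 1 * d₁ * star (M 0 1) := by
  simp [Matrix.mul_apply, Fin.sum_univ_two, Matrix.diagonal_apply, Matrix.star_apply,
    add_mul, mul_add]

lemma rowmat (r₀ r₁ d₀ d₁ : A) :
    (Matrix.of ![![r₀, r₁], ![0, 0]]) * Matrix.diagonal ![d₀, d₁] *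
      star (Matrix.of ![![r₀, r₁], ![0, 0]]) =
      Matrix.diagonal ![r₀ * d₀ * star r₀ + r₁ * d₁ * star r₁, 0] := by
  ext i j
  fin_cases i <;> fin_cases j <;>
    simp [Matrix.mul_apply, Fin.sum_univ_two, Matrix.diagonal_apply, Matrix.star_apply,
      Matrix.vecMul, dotProduct, mul_assoc]

lemma lift_v {B : Type*} [NonUnitalCStarAlgebra B] {p q rr : B}
    (hp1 : star p = p) (hp2 : p * p = p) (hq1 : star q = q) (hq2 : q * q = q)
    (hrr : ‖rr * q * star rr - p‖ < 1/2) :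
    ∃ v : B, star v * v = p ∧ q * v = v ∧ v * p = v := by
  letI : PartialOrder (Unitization ℂ B) := CStarAlgebra.spectralOrder _
  letI : StarOrderedRing (Unitization ℂ B) := CStarAlgebra.spectralOrderedRing _
  have hq2' : ∀ w : B, q * (q * w) = q * w := fun w => by rw [← mul_assoc, hq2]
  have hpnorm : ‖p‖ ≤ 1 := by
    have h := CStarRing.norm_star_mul_self (x := p)
    rw [hp1, hp2] at h
    nlinarith [norm_nonneg p]
  set X : B := rr * q * star rr with hX_def
  set z : B := p * X * p with hz_def
  have hppp : p * p * p = p := by rw [hp2, hp2]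
  have h1 : p * (X - p) * p = z - p := by
    rw [mul_sub, sub_mul, hppp]
  have hzp_norm : ‖z - p‖ < 1/2 := by
    calc ‖z - p‖ = ‖p * (X - p) * p‖ := by rw [h1]
    _ ≤ ‖p * (X - p)‖ * ‖p‖ := norm_mul_le _ _
    _ ≤ ‖p‖ * ‖X - p‖ * ‖p‖ :=
        mul_le_mul_of_nonneg_right (norm_mul_le _ _) (norm_nonneg _)
    _ ≤ 1 * ‖X - p‖ * 1 := by
        have h0 := norm_nonneg (X - p)
        have h0' := norm_nonneg p
        have s1 : ‖p‖ * ‖X - p‖ ≤ 1 * ‖X - p‖ := mul_le_mul_of_nonneg_right hpnorm h0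
        exact mul_le_mul s1 hpnorm h0' (by positivity)
    _ = ‖X - p‖ := by ring
    _ < 1/2 := hrr
  have hpz : p * z = z := by
    rw [hz_def, ← mul_assoc, ← mul_assoc, hp2]
  have hzp : z * p = z := by
    rw [hz_def, mul_assoc (p * X), hp2]
  have hm2 : (p * rr * q) * (q * star rr * p) = z := by
    rw [hz_def, hX_def]
    simp only [mul_assoc, hq2']
  have hPstar : star (p : Unitization ℂ B) = (p : Unitization ℂ B) := by
    rw [← Unitization.inr_star, hp1]
  have hPP : (p : Unitization ℂ B) * p = p := by rw [← Unitization.inr_mul, hp2]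
  have hPZ : (p : Unitization ℂ B) * z = z := by rw [← Unitization.inr_mul, hpz]
  have hZP : (z : Unitization ℂ B) * p = z := by rw [← Unitization.inr_mul, hzp]
  have hZpos : 0 ≤ (z : Unitization ℂ B) := by
    have hzm : z = (p * rr * q) * star (p * rr * q) := by
      rw [← hm2]
      simp only [star_mul, hq1, hp1, star_star, mul_assoc]
    rw [hzm, Unitization.inr_mul, Unitization.inr_star]
    exact mul_star_self_nonneg _
  have hQ1 : 0 ≤ 1 - (p : Unitization ℂ B) := by
    have expand : (1 - (p : Unitization ℂ B)) * (1 - (p : Unitization ℂ B)) =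
        1 - (p : Unitization ℂ B) - p + (p : Unitization ℂ B) * p := by noncomm_ring
    rw [hPP] at expand
    have expand2 : (1 : Unitization ℂ B) - p - p + p = 1 - (p : Unitization ℂ B) :=
      sub_add_cancel _ _
    have hstar : star (1 - (p : Unitization ℂ B)) = 1 - (p : Unitization ℂ B) := by
      rw [star_sub, star_one, hPstar]
    calc (0 : Unitization ℂ B) ≤ star (1 - (p : Unitization ℂ B)) * (1 - p) :=
          star_mul_self_nonneg _
    _ = 1 - (p : Unitization ℂ B) := by rw [hstar, expand, expand2]
  have hupos : 0 ≤ 1 - (p : Unitization ℂ B) + z := add_nonneg hQ1 hZpos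
  have hsmall : ‖1 - (1 - (p : Unitization ℂ B) + z)‖ < 1 := by
    have h2 : (1 : Unitization ℂ B) - (1 - (p : Unitization ℂ B) + z) = (p : Unitization ℂ B) - z := by
      abel
    rw [h2, ← Unitization.inr_sub, Unitization.norm_inr, norm_sub_rev]
    linarith
  have hu : IsUnit (1 - (p : Unitization ℂ B) + z) := ⟨Units.oneSub _ hsmall, by simp [sub_sub_cancel]⟩
  obtain ⟨y, hy_star, hey, hyzy⟩ := unified_corner hPP hPZ hZP hu hupos
  set V : Unitization ℂ B := (↑(q * star rr * p) : Unitization ℂ B) * y with hV_def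
  have hVfst : V.fst = 0 := by
    rw [hV_def, Unitization.fst_mul, Unitization.fst_inr, zero_mul]
  set v : B := V.snd with hv_def
  have hVcoe : (↑v : Unitization ℂ B) = V := by
    have h3 := Unitization.inl_fst_add_inr_snd_eq V
    rwa [hVfst, Unitization.inl_zero, zero_add] at h3
  have hstarqsp : star (q * star rr * p) = p * rr * q := by
    simp only [star_mul, star_star, hq1, hp1, mul_assoc]
  refine ⟨v, ?_, ?_, ?_⟩
  · apply Unitization.inr_injective (R := ℂ)
    rw [Unitization.inr_mul, Unitization.inr_star, hVcoe]
    calc star V * V = (star y * ↑(star (q * star rr * p))) * (↑(q * star rr * p) * y) := by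
          rw [hV_def, star_mul, Unitization.inr_star]
    _ = star y * (↑(star (q * star rr * p)) * ↑(q * star rr * p)) * y := by
          simp only [mul_assoc]
    _ = y * (z : Unitization ℂ B) * y := by
          rw [hy_star, hstarqsp, ← Unitization.inr_mul, hm2, mul_assoc]
    _ = (p : Unitization ℂ B) := hyzy
  · apply Unitization.inr_injective (R := ℂ)
    rw [Unitization.inr_mul, hVcoe, hV_def, ← mul_assoc, ← Unitization.inr_mul]
    congr 2
    rw [← mul_assoc, ← mul_assoc, hq2]
  · apply Unitization.inr_injective (R := ℂ)
    have hqspp : (q * star rr * p) * p = q * star rr * p := by rw [mul_assoc, hp2]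
    rw [Unitization.inr_mul, hVcoe, hV_def, mul_assoc, ← hey.eq, ← mul_assoc,
      ← Unitization.inr_mul, hqspp]

lemma build_x {A B : Type*} [NonUnitalCStarAlgebra A] [NonUnitalCStarAlgebra B]
    (π : A →⋆ₙₐ[ℂ] B) (hcont : Continuous π)
    {e a₁ : A} (he1 : star e = e) (he2 : e * e = e)
    (ha₁e : a₁ * e = a₁) (hπd : π (e - star a₁ * a₁) = 0) :
    ∃ x w₀ : A, (∃ y, x = star y * y) ∧ π x = 0 ∧ e * x * e = x ∧
      w₀ * (star a₁ * a₁ + x) * star w₀ = e := by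
  letI : PartialOrder (Unitization ℂ A) := CStarAlgebra.spectralOrder _
  letI : StarOrderedRing (Unitization ℂ A) := CStarAlgebra.spectralOrderedRing _
  have hesta : e * star a₁ = star a₁ := by
    rw [← he1, ← star_mul, ha₁e]
  set d : A := e - star a₁ * a₁ with hd_def
  have hd_sa : IsSelfAdjoint d := by
    rw [hd_def, IsSelfAdjoint, star_sub, star_mul, star_star, he1]
  have h8 : e * (star a₁ * a₁) * e = star a₁ * a₁ := by
    rw [← mul_assoc, hesta, mul_assoc, ha₁e]
  have hede : e * d * e = d := by
    rw [hd_def, mul_sub, sub_mul, he2, he2, h8]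
  -- positive and negative parts
  set G : A := d⁺ with hG_def
  set H : A := d⁻ with hH_def
  have hGH : G - H = d := CFC.posPart_sub_negPart d hd_sa
  set sp : A := cfcₙ (fun s : ℝ => Real.sqrt (max s 0)) d with hsp_def
  set sn : A := cfcₙ (fun s : ℝ => Real.sqrt (max (-s) 0)) d with hsn_def
  have hsp_sa : IsSelfAdjoint sp := cfcₙ_predicate _ d
  have hsn_sa : IsSelfAdjoint sn := cfcₙ_predicate _ d
  have hspsp : sp * sp = G := by
    rw [hsp_def, ← cfcₙ_mul _ _ d, hG_def, CFC.posPart_def]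
    apply cfcₙ_congr
    intro s _
    simp only
    rw [Real.mul_self_sqrt (le_max_right s 0), _root_.posPart_def]
  have hsnsn : sn * sn = H := by
    rw [hsn_def, ← cfcₙ_mul _ _ d, hH_def, CFC.negPart_def]
    apply cfcₙ_congr
    intro s _
    simp only
    rw [Real.mul_self_sqrt (le_max_right (-s) 0), _root_.negPart_def]
  set x : A := e * G * e with hx_def
  set c : A := star a₁ * a₁ + x with hc_def
  have hπG : π G = 0 := by
    have h4 : π G = cfcₙ (·⁺ : ℝ → ℝ) (π d) := by
      rw [hG_def, CFC.posPart_def]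
      exact NonUnitalStarAlgHom.map_cfcₙ π _ d
    rw [h4, hπd, ← CFC.posPart_def, CFC.posPart_zero]
  -- corner argument (construct w₀ first)
  have hex : e * x = x := by rw [hx_def, ← mul_assoc, ← mul_assoc, he2]
  have hxe : x * e = x := by rw [hx_def, mul_assoc, mul_assoc, he2, ← mul_assoc]
  have hec : e * c = c := by
    rw [hc_def, mul_add, hex, ← mul_assoc, hesta]
  have hce : c * e = c := by
    rw [hc_def, add_mul, hxe, mul_assoc, ha₁e]
  have hcme : c - e = e * (sn * sn) * e := by
    have h5 : c - e = x - d := by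
      rw [hc_def, hd_def, hx_def]
      abel
    rw [h5, hsnsn, hx_def, ← hede]
    rw [← sub_mul, ← mul_sub]
    congr 2
    rw [← hGH]
    abel
  have hCpos : 0 ≤ ((c : Unitization ℂ A) - e) := by
    have h6 : (c : Unitization ℂ A) - e = star ((sn * e : A) : Unitization ℂ A) * ((sn * e : A) : Unitization ℂ A) := by
      rw [← Unitization.inr_sub, hcme, ← Unitization.inr_star, ← Unitization.inr_mul]
      congr 1
      rw [star_mul, hsn_sa.star_eq, he1]
      simp only [mul_assoc]
    rw [h6]
    exact star_mul_self_nonneg _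
  have hupos : 0 ≤ 1 - (e : Unitization ℂ A) + c := by
    have h7 : 1 - (e : Unitization ℂ A) + c = 1 + ((c : Unitization ℂ A) - e) := by abel
    rw [h7]
    exact add_nonneg zero_le_one hCpos
  have hu : IsUnit (1 - (e : Unitization ℂ A) + c) := by
    have h7 : 1 - (e : Unitization ℂ A) + c = 1 + ((c : Unitization ℂ A) - e) := by abel
    rw [h7]
    exact CStarAlgebra.isUnit_of_le 1
      (le_add_of_nonneg_right hCpos) isStrictlyPositive_one
  have hEE : (e : Unitization ℂ A) * e = e := by rw [← Unitization.inr_mul, he2]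
  have hEC : (e : Unitization ℂ A) * c = c := by rw [← Unitization.inr_mul, hec]
  have hCE : (c : Unitization ℂ A) * e = c := by rw [← Unitization.inr_mul, hce]
  obtain ⟨y, hy_star, hey, hycy⟩ := unified_corner hEE hEC hCE hu hupos
  set W : Unitization ℂ A := (e : Unitization ℂ A) * y with hW_def
  have hWfst : W.fst = 0 := by
    rw [hW_def, Unitization.fst_mul, Unitization.fst_inr, zero_mul]
  set w₀ : A := W.snd with hw_def
  have hWcoe : (↑w₀ : Unitization ℂ A) = W := by
    have h3 := Unitization.inl_fst_add_inr_snd_eq W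
    rwa [hWfst, Unitization.inl_zero, zero_add] at h3
  refine ⟨x, w₀, ⟨sp * e, ?_⟩, ?_, ?_, ?_⟩
  · -- x = star (sp * e) * (sp * e)
    rw [star_mul, hsp_sa.star_eq, he1, hx_def, ← hspsp]
    simp only [mul_assoc]
  · rw [hx_def, map_mul, map_mul, hπG, mul_zero, zero_mul]
  · rw [hx_def, ← mul_assoc, ← mul_assoc, he2, mul_assoc (e * G), he2]
  · apply Unitization.inr_injective (R := ℂ)
    rw [Unitization.inr_mul, Unitization.inr_mul, Unitization.inr_star, hWcoe, ← hc_def]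
    calc W * (c : Unitization ℂ A) * star W
        = (e : Unitization ℂ A) * (y * c * y) * e := by
          rw [hW_def, star_mul, hy_star, ← Unitization.inr_star, he1]
          simp only [mul_assoc]
    _ = (e : Unitization ℂ A) := by rw [hycy, hEE, hEE]
end CuntzHelpers

open Filter Topology

/-- Cuntz subequivalence: `a ≲ b` iff there is a sequence `(r j)` with
`r j * b * (r j)* → a`. -/
def CuntzSub {R : Type*} [Mul R] [Star R] [TopologicalSpace R] (a b : R) : Prop :=
  ∃ r : ℕ → R, Tendsto (fun j => r j * b * star (r j)) atTop (𝓝 a)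

/-- A projection in a C*-algebra: a self-adjoint idempotent. -/
def IsCProjection {A : Type*} [NonUnitalCStarAlgebra A] (p : A) : Prop :=
  star p = p ∧ p * p = p

/-- A positive element of a C*-algebra, characterized as `x = y*y`. -/
def IsPositive {A : Type*} [NonUnitalCStarAlgebra A] (x : A) : Prop :=
  ∃ y : A, x = star y * y

/-- for an extension `0 → I → A →π B → 0` of C*-algebras and
projections `e`, `f` in `A`: `π e ≲ π f` in `B` if and only if there is a
positive `x ∈ I = ker π` with `e ≲ f ⊕ x` in `M₂(A)`. -/
theorem stmt1 {A B : Type*} [NonUnitalCStarAlgebra A] [NonUnitalCStarAlgebra B]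
    (π : A →⋆ₙₐ[ℂ] B) (hπ : Function.Surjective π) (hcont : Continuous π)
    (e f : A) (he : IsCProjection e) (hf : IsCProjection f) :
    CuntzSub (π e) (π f) ↔
      ∃ x : A, IsPositive x ∧ π x = 0 ∧
        CuntzSub (Matrix.diagonal ![e, 0] : Matrix (Fin 2) (Fin 2) A)
          (Matrix.diagonal ![f, x]) := by
  constructor
  · rintro ⟨r, hr⟩
    -- pick an index j with the product close to π e
    have hev : ∀ᶠ j in atTop, r j * π f * star (r j) ∈ Metric.ball (π e) (1/2) :=
      hr (Metric.ball_mem_nhds (π e) (by norm_num : (0:ℝ) < 1/2))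
    obtain ⟨j, hj⟩ := hev.exists
    have hj' : ‖r j * π f * star (r j) - π e‖ < 1/2 := by
      rwa [Metric.mem_ball, dist_eq_norm] at hj
    have hπe1 : star (π e) = π e := by rw [← map_star, he.1]
    have hπe2 : π e * π e = π e := by rw [← map_mul, he.2]
    have hπf1 : star (π f) = π f := by rw [← map_star, hf.1]
    have hπf2 : π f * π f = π f := by rw [← map_mul, hf.2]
    obtain ⟨v, hv1, hv2, hv3⟩ := lift_v hπe1 hπe2 hπf1 hπf2 hj'
    obtain ⟨a, ha⟩ := hπ v
    set a₁ : A := f * a * e with ha₁_def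
    have hπa₁ : π a₁ = v := by
      rw [ha₁_def, map_mul, map_mul, ha, hv2, hv3]
    have ha₁e : a₁ * e = a₁ := by rw [ha₁_def, mul_assoc (f * a), he.2]
    have hfa₁ : f * a₁ = a₁ := by
      rw [ha₁_def, ← mul_assoc, ← mul_assoc, hf.2]
    have hπd : π (e - star a₁ * a₁) = 0 := by
      rw [map_sub, map_mul, map_star, hπa₁, hv1, sub_self]
    obtain ⟨x, w₀, hxpos, hπx, hexe, hw⟩ := build_x π hcont he.1 he.2 ha₁e hπd
    refine ⟨x, hxpos, hπx, fun _ => Matrix.of ![![w₀ * star a₁, w₀ * e], ![0, 0]], ?_⟩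
    have hfa₁' : ∀ w : A, f * (a₁ * w) = a₁ * w := fun w => by rw [← mul_assoc, hfa₁]
    have hexe' : ∀ w : A, e * (x * (e * w)) = x * w := fun w => by
      rw [← mul_assoc, ← mul_assoc, hexe]
    have hgoal : (w₀ * star a₁) * f * star (w₀ * star a₁) + (w₀ * e) * x * star (w₀ * e) = e := by
      simp only [star_mul, star_star, he.1]
      simp only [mul_assoc, hfa₁', hexe']
      simpa only [mul_add, add_mul, mul_assoc] using hw
    have hkey := rowmat (w₀ * star a₁) (w₀ * e) f x
    rw [hgoal] at hkey
    rw [show (fun _ : ℕ => Matrix.of ![![w₀ * star a₁, w₀ * e], ![0, 0]] *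
        Matrix.diagonal ![f, x] * star (Matrix.of ![![w₀ * star a₁, w₀ * e], ![0, 0]])) =
        fun _ : ℕ => (Matrix.diagonal ![e, 0] : Matrix (Fin 2) (Fin 2) A) from
      funext fun _ => hkey]
    exact tendsto_const_nhds
  · rintro ⟨x, -, hπx, r, hr⟩
    refine ⟨fun j => π (r j 0 0), ?_⟩
    have hcont00 : Continuous (fun M : Matrix (Fin 2) (Fin 2) A => M 0 0) :=
      continuous_id.matrix_elem 0 0
    have h1 : Tendsto (fun j => (r j * Matrix.diagonal ![f, x] * star (r j)) 0 0) atTop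
        (𝓝 ((Matrix.diagonal ![e, 0] : Matrix (Fin 2) (Fin 2) A) 0 0)) :=
      ((hcont00.tendsto _).comp hr : _)
    have h2 : (Matrix.diagonal ![e, (0:A)] : Matrix (Fin 2) (Fin 2) A) 0 0 = e := by simp
    rw [h2] at h1
    have h3 : Tendsto (fun j => π ((r j * Matrix.diagonal ![f, x] * star (r j)) 0 0)) atTop
        (𝓝 (π e)) := ((hcont.tendsto e).comp h1 : _)
    have h4 : (fun j => π ((r j * Matrix.diagonal ![f, x] * star (r j)) 0 0)) =
        fun j => π (r j 0 0) * π f * star (π (r j 0 0)) := by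
      funext j
      rw [entry00, map_add, map_mul, map_mul, map_mul, map_mul, map_star, map_star,
        hπx, mul_zero, zero_mul, add_zero]
    rwa [h4] at h3
end

section
/- Let E be a finite directed graph with no cycles and let τ: E⁰ → ℝ₊ be a graph-trace, i.e., τ(v) = Σ_{e: s(e)=v} τ(r(e)) for every vertex v emitting at least one edge. Then for every vertex v ∈ E⁰, τ(v) = Σ_{i=1}^{k} n_{v_i} τ(v_i), where v_1, ..., v_k are the sinks of E and n_{v_i} is the number of finite paths from v to v_i (counting the empty path when v = v_i). -/
open Finset

/-- `IsPathFrom s r v w l`: the list of edges `l` is a path from vertex `v` to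
vertex `w` (the empty list is a path from `v` to `v`). -/
def IsPathFrom {V E : Type*} (s r : E → V) (v w : V) : List E → Prop
  | [] => v = w
  | e :: l => s e = v ∧ IsPathFrom s r (r e) w l

section aux
variable {V E : Type*} (s r : E → V)

lemma isPathFrom_append {v w u : V} {l₁ l₂ : List E}
    (h₁ : IsPathFrom s r v w l₁) (h₂ : IsPathFrom s r w u l₂) :
    IsPathFrom s r v u (l₁ ++ l₂) := by
  induction l₁ generalizing v with
  | nil => cases h₁; simpa
  | cons e l ih => exact ⟨h₁.1, ih h₁.2⟩

/-- one-step relation: `myRel a b` iff there is an edge from `b` to `a`. -/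
def myRel (a b : V) : Prop := ∃ e : E, s e = b ∧ r e = a

lemma path_of_transGen {a b : V} (h : Relation.TransGen (myRel s r) a b) :
    ∃ l : List E, l ≠ [] ∧ IsPathFrom s r b a l := by
  induction h with
  | single h =>
      obtain ⟨e, he, hre⟩ := h
      exact ⟨[e], by simp, he, hre⟩
  | tail _ h ih =>
      obtain ⟨e, he, hre⟩ := h
      obtain ⟨l, -, hl⟩ := ih
      exact ⟨e :: l, by simp, he, hre ▸ hl⟩

lemma wf_transGen [Finite V]
    (hnocycle : ∀ (v : V) (l : List E), l ≠ [] → ¬ IsPathFrom s r v v l) : WellFounded (Relation.TransGen (myRel s r)) := by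
  haveI : IsTrans V (Relation.TransGen (myRel s r)) := ⟨fun _ _ _ => Relation.TransGen.trans⟩
  haveI : IsIrrefl V (Relation.TransGen (myRel s r)) := by
    constructor
    intro a ha
    obtain ⟨l, hne, hl⟩ := path_of_transGen s r ha
    exact hnocycle a l hne hl
  exact Finite.wellFounded_of_trans_of_irrefl _

lemma paths_finite [Finite V] [Finite E]
    (hnocycle : ∀ (v : V) (l : List E), l ≠ [] → ¬ IsPathFrom s r v v l) (w : V) :
    ∀ v : V, {l : List E | IsPathFrom s r v w l}.Finite := by
  intro v
  induction v using (wf_transGen s r hnocycle).induction with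
  | _ v ih =>
    have hsub : {l : List E | IsPathFrom s r v w l} ⊆
        insert ([] : List E)
          (⋃ e ∈ {e : E | s e = v}, (e :: ·) '' {l : List E | IsPathFrom s r (r e) w l}) := by
      rintro (⟨⟩ | ⟨e, l⟩) hl
      · exact Set.mem_insert _ _
      · exact Set.mem_insert_of_mem _
          (Set.mem_biUnion hl.1 ⟨l, hl.2, rfl⟩)
    refine Set.Finite.subset (Set.Finite.insert _ ?_) hsub
    refine Set.Finite.biUnion (Set.toFinite _) fun e he => ?_
    exact Set.Finite.image _ (ih (r e) (Relation.TransGen.single ⟨e, he, rfl⟩))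

end aux

/-- let `E` be a finite directed graph with no cycles and let `τ`
be a (nonnegative real-valued) graph-trace.  Then for every vertex `v`,
`τ v = Σ_{sinks w} (number of paths from v to w) * τ w`, where the empty path
is counted when `v = w`. -/
theorem stmt6 {V E : Type*} [Fintype V] [Fintype E] [DecidableEq V] [DecidableEq E]
    (s r : E → V)
    (hnocycle : ∀ (v : V) (l : List E), l ≠ [] → ¬ IsPathFrom s r v v l)
    (τ : V → ℝ) (hpos : ∀ v, 0 ≤ τ v)
    (htrace : ∀ v : V, (∃ e : E, s e = v) →
      τ v = ∑ e ∈ univ.filter (fun e => s e = v), τ (r e)) :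
    ∀ v : V,
      τ v = ∑ w ∈ univ.filter (fun w => ∀ e : E, s e ≠ w),
        (Nat.card {l : List E // IsPathFrom s r v w l}) * τ w := by
  haveI hfin : ∀ v w : V, Finite {l : List E // IsPathFrom s r v w l} := fun v w =>
    (paths_finite s r hnocycle w v).to_subtype
  intro v
  induction v using (wf_transGen s r hnocycle).induction with
  | _ v ih =>
  by_cases hsink : ∃ e : E, s e = v
  · -- v is not a sink
    obtain ⟨e₀, he₀⟩ := hsink
    have key : ∀ w : V, w ≠ v →
        (Nat.card {l : List E // IsPathFrom s r v w l} : ℝ) =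
          ∑ e ∈ univ.filter (fun e => s e = v),
            (Nat.card {l : List E // IsPathFrom s r (r e) w l} : ℝ) := by
      intro w hw
      haveI : ∀ u : V, Fintype {l : List E // IsPathFrom s r u w l} :=
        fun u => Fintype.ofFinite _
      have hbij : Function.Bijective
          (fun p : (Σ e : {e : E // s e = v}, {l : List E // IsPathFrom s r (r e.1) w l}) =>
            (⟨p.1.1 :: p.2.1, p.1.2, p.2.2⟩ : {l : List E // IsPathFrom s r v w l})) := by
        constructor
        · rintro ⟨⟨e, he⟩, ⟨l, hl⟩⟩ ⟨⟨e', he'⟩, ⟨l', hl'⟩⟩ h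
          simp only [Subtype.mk.injEq, List.cons.injEq] at h
          obtain ⟨h1, h2⟩ := h
          subst_vars; rfl
        · rintro ⟨(⟨⟩ | ⟨e, l⟩), hl⟩
          · exact absurd hl.symm hw
          · exact ⟨⟨⟨e, hl.1⟩, ⟨l, hl.2⟩⟩, rfl⟩
      rw [← Nat.card_eq_of_bijective _ hbij, Nat.card_eq_fintype_card, Fintype.card_sigma]
      push_cast
      have hsub := Finset.sum_subtype (F := Subtype.fintype _) (p := fun e => s e = v) (univ.filter (fun e => s e = v)) (by simp)
        (fun e => (Fintype.card {l : List E // IsPathFrom s r (r e) w l} : ℝ))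
      rw [← hsub]
      exact Finset.sum_congr rfl fun e _ => by rw [Nat.card_eq_fintype_card]
    rw [htrace v ⟨e₀, he₀⟩]
    have := fun (e : E) (he : s e = v) =>
      ih (r e) (Relation.TransGen.single ⟨e, he, rfl⟩)
    rw [Finset.sum_congr rfl (fun e he => this e (by simpa using he))]
    rw [Finset.sum_comm]
    refine Finset.sum_congr rfl fun w hw => ?_
    have hwv : w ≠ v := by
      simp only [mem_filter] at hw
      intro h; exact hw.2 e₀ (h ▸ he₀)
    rw [← Finset.sum_mul, key w hwv]
  · -- v is a sink
    push_neg at hsink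
    have hv : v ∈ univ.filter (fun w => ∀ e : E, s e ≠ w) := by
      simp only [mem_filter, mem_univ, true_and]
      intro e h; exact hsink e h
    rw [Finset.sum_eq_single_of_mem v hv]
    · haveI : Unique {l : List E // IsPathFrom s r v v l} := by
        refine ⟨⟨⟨[], rfl⟩⟩, ?_⟩
        rintro ⟨(⟨⟩ | ⟨e, l⟩), hl⟩
        · rfl
        · exact absurd hl.1 (hsink e)
      rw [Nat.card_unique]; ring
    · intro w hwmem hwv
      haveI : IsEmpty {l : List E // IsPathFrom s r v w l} := by
        constructor
        rintro ⟨(⟨⟩ | ⟨e, l⟩), hl⟩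
        · exact hwv hl.symm
        · exact hsink e hl.1
      rw [Nat.card_of_isEmpty]; simp
end

section
/- Let E be a locally finite directed graph with no sinks, and suppose that every vertex of E⁰ connects to a cycle having an exit in every subgraph (F, {e : r(e) ∈ F}) where F is the complement of a hereditary and saturated subset of E⁰. Then for every vertex v ∈ E⁰, the projection P_v ∈ C*(E) is properly infinite. -/
open Filter Topology

/-- A Cuntz–Krieger `E`-family in a C*-algebra `R` for the directed graph with
vertices `V`, edges `E`, source `s` and range `r`; `es v` is the (finite) set
of edges emitted by `v` (so the graph is row-finite). -/
structure CKFamily (V E : Type*) (s r : E → V) (es : V → Finset E)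
    (R : Type*) [NonUnitalCStarAlgebra R] where
  P : V → R
  S : E → R
  hes : ∀ v e, e ∈ es v ↔ s e = v
  P_sa : ∀ v, star (P v) = P v
  P_idem : ∀ v, P v * P v = P v
  P_orth : ∀ v w, v ≠ w → P v * P w = 0
  S_star : ∀ e, star (S e) * S e = P (r e)
  CK : ∀ v, (es v).Nonempty → P v = ∑ e ∈ es v, S e * star (S e)

/-- `R` is (a realization of) the graph C*-algebra `C*(E)`: it carries a
Cuntz–Krieger `E`-family with non-zero vertex projections which generates `R`
and is universal among Cuntz–Krieger `E`-families. -/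
structure GraphCStarAlgebra (V E : Type*) (s r : E → V) (es : V → Finset E)
    (R : Type*) [NonUnitalCStarAlgebra R] extends CKFamily V E s r es R where
  P_ne : ∀ v, P v ≠ 0
  generates : closure (↑(NonUnitalStarAlgebra.adjoin ℂ
    (Set.range P ∪ Set.range S) : NonUnitalStarSubalgebra ℂ R) : Set R) = Set.univ
  universal : ∀ (B : Type) [NonUnitalCStarAlgebra B] (f : CKFamily V E s r es B),
    ∃ φ : R →⋆ₙₐ[ℂ] B, (∀ v, φ (P v) = f.P v) ∧ (∀ e, φ (S e) = f.S e)

/-- `B` realizes the stabilization `A ⊗ K`, witnessed by a system of maps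
`φ i j : A → B` corresponding to the matrix-unit corners `e i j ⊗ A`. -/
structure IsStabilizationOf (A : Type*) [NonUnitalCStarAlgebra A]
    (B : Type*) [NonUnitalCStarAlgebra B] (φ : ℕ → ℕ → A → B) : Prop where
  linear : ∀ i j, IsLinearMap ℂ (φ i j)
  mul : ∀ i j k l x y, φ i j x * φ k l y = if j = k then φ i l (x * y) else 0
  star_map : ∀ i j x, star (φ i j x) = φ j i (star x)
  isometry : ∀ i j x, ‖φ i j x‖ = ‖x‖
  dense : closure (↑(Submodule.span ℂ {b : B | ∃ i j x, b = φ i j x}) : Set B)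
    = Set.univ

/-- A C*-algebra is stable (`C ≅ C ⊗ K`). -/
def IsStable (C : Type*) [NonUnitalCStarAlgebra C] : Prop :=
  ∃ ψ : ℕ → ℕ → C → C, IsStabilizationOf C C ψ

/-- A set of vertices is hereditary: it is closed under following edges. -/
def Hereditary {V E : Type*} (s r : E → V) (H : Set V) : Prop :=
  ∀ e : E, s e ∈ H → r e ∈ H

/-- A set of vertices is saturated: a vertex emitting at least one edge, all
of whose emitted edges end in `H`, belongs to `H`. -/
def Saturated {V E : Type*} (s r : E → V) (es : V → Finset E) (H : Set V) : Prop :=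
  ∀ v : V, (es v).Nonempty → (∀ e ∈ es v, r e ∈ H) → v ∈ H

/-- A projection is properly infinite: `p ≠ 0` and `p ⊕ p ≲ p` in `M₂`. -/
def ProperlyInfinite {R : Type*} [NonUnitalCStarAlgebra R] (p : R) : Prop :=
  p ≠ 0 ∧ CuntzSub (Matrix.diagonal ![p, p] : Matrix (Fin 2) (Fin 2) R)
    (Matrix.diagonal ![p, 0])


section PartA
variable {V E : Type*} {s : E → V} {r : E → V} {es : V → Finset E}
  {R : Type*} [NonUnitalCStarAlgebra R]

lemma zero_of_star_mul_self {A : Type*} [NonUnitalNormedRing A] [StarRing A] [CStarRing A]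
    (a : A) (h : star a * a = 0) : a = 0 := by
  have h2 := CStarRing.norm_star_mul_self (x := a)
  rw [h, norm_zero] at h2
  exact norm_eq_zero.mp (mul_self_eq_zero.mp h2.symm)

namespace CKFamily

variable (f : CKFamily V E s r es R)

/-- S e is a partial isometry: `S e * P (r e) = S e`. -/
lemma S_mul_P (e : E) : f.S e * f.P (r e) = f.S e := by
  set a := f.S e
  have hp : star a * a = f.P (r e) := f.S_star e
  apply sub_eq_zero.mp
  apply zero_of_star_mul_self
  have hsa : star (f.P (r e)) = f.P (r e) := f.P_sa _
  have hid : f.P (r e) * f.P (r e) = f.P (r e) := f.P_idem _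
  calc star (a * f.P (r e) - a) * (a * f.P (r e) - a)
      = f.P (r e) * (star a * a) * f.P (r e) - f.P (r e) * (star a * a)
        - (star a * a) * f.P (r e) + star a * a := by
        simp only [star_sub, star_mul, hsa]; noncomm_ring
    _ = 0 := by rw [hp]; simp only [hid]; abel

lemma Q_mul_S (e : E) : (f.S e * star (f.S e)) * f.S e = f.S e := by
  rw [mul_assoc, f.S_star e, f.S_mul_P e]

lemma Q_idem (e : E) : (f.S e * star (f.S e)) * (f.S e * star (f.S e)) = f.S e * star (f.S e) := by
  rw [← mul_assoc, f.Q_mul_S e]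

lemma Q_sa (e : E) : star (f.S e * star (f.S e)) = f.S e * star (f.S e) := by
  simp [star_mul]

lemma inr_sum (t : Finset E) (g : E → R) :
    ((∑ x ∈ t, g x : R) : Unitization ℂ R) = ∑ x ∈ t, ((g x : R) : Unitization ℂ R) := by
  classical
  induction t using Finset.induction_on with
  | empty => simp
  | insert a t2 h ih => rw [Finset.sum_insert h, Finset.sum_insert h,
      Unitization.inr_add, ih]

/-- `P (s e) * S e = S e`.  This uses positivity, via the unitization. -/
lemma P_mul_S (e : E) : f.P (s e) * f.S e = f.S e := by
  classical
  set v := s e with hv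
  have he : e ∈ es v := (f.hes v e).mpr rfl
  have hCK := f.CK v ⟨e, he⟩
  set U := Unitization ℂ R with hU
  let c : R → U := fun x => (x : U)
  have hcmul : ∀ x y : R, c (x * y) = c x * c y := fun x y => Unitization.inr_mul ℂ x y
  have hcstar : ∀ x : R, star (c x) = c (star x) := fun x => by
    simp [c, Unitization.inr_star]
  set u : U := 1 - c (f.P v) with hu
  have husa : star u = u := by
    rw [hu, star_sub, star_one, hcstar, f.P_sa]
  have hPu : c (f.P v) * u = 0 := by
    rw [hu, mul_sub, mul_one, ← hcmul, f.P_idem, sub_self]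
  have hsum : ∑ g ∈ es v, (u * (c (f.S g) * star (c (f.S g))) * u) = 0 := by
    have h1 : ∑ g ∈ es v, (c (f.S g) * star (c (f.S g))) = c (f.P v) := by
      rw [hCK]
      rw [show c (∑ g ∈ es v, f.S g * star (f.S g)) =
        ∑ g ∈ es v, c (f.S g * star (f.S g)) from inr_sum _ _]
      refine Finset.sum_congr rfl fun g _ => ?_
      rw [hcmul, hcstar]
    calc ∑ g ∈ es v, (u * (c (f.S g) * star (c (f.S g))) * u)
        = u * (∑ g ∈ es v, (c (f.S g) * star (c (f.S g)))) * u := by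
          rw [Finset.mul_sum, Finset.sum_mul]
      _ = u * c (f.P v) * u := by rw [h1]
      _ = 0 := by
          have h2 : u * c (f.P v) = 0 := by
            have h3 := congrArg star hPu
            rwa [star_mul, husa, hcstar, f.P_sa, star_zero] at h3
          rw [h2, zero_mul]
  have hterm : ∀ g : E, u * (c (f.S g) * star (c (f.S g))) * u
      = star (star (c (f.S g)) * u) * (star (c (f.S g)) * u) := by
    intro g
    rw [star_mul, husa, star_star]
    noncomm_ring
  have hnn : ∀ g ∈ es v, (0 : U) ≤ u * (c (f.S g) * star (c (f.S g))) * u := by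
    intro g _
    rw [hterm g]
    exact star_mul_self_nonneg _
  have hz := (Finset.sum_eq_zero_iff_of_nonneg hnn).mp hsum e he
  rw [hterm e] at hz
  have hc0 : star (c (f.S e)) * u = 0 := zero_of_star_mul_self _ hz
  rw [hu, mul_sub, mul_one, sub_eq_zero, hcstar, ← hcmul] at hc0
  have h4 : star (f.S e) = star (f.S e) * f.P v := Unitization.inr_injective hc0
  have h5 := congrArg star h4
  simp only [star_mul, star_star, f.P_sa] at h5
  exact h5.symm

lemma S_star_mul_P (e : E) : star (f.S e) * f.P (s e) = star (f.S e) := by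
  have h := congrArg star (f.P_mul_S e)
  rwa [star_mul, f.P_sa] at h

lemma P_mul_Q (e : E) : f.P (s e) * (f.S e * star (f.S e)) = f.S e * star (f.S e) := by
  rw [← mul_assoc, f.P_mul_S e]

lemma Q_mul_P (e : E) : (f.S e * star (f.S e)) * f.P (s e) = f.S e * star (f.S e) := by
  rw [mul_assoc, f.S_star_mul_P e]

/-- orthogonality of distinct edge corners -/
lemma Q_orth {e e' : E} (h : e ≠ e') : (f.S e * star (f.S e)) * (f.S e' * star (f.S e')) = 0 := by
  classical
  by_cases hs : s e' = s e
  · -- same source: positivity argument in the unitization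
    set v := s e with hv
    have he : e ∈ es v := (f.hes v e).mpr rfl
    have he' : e' ∈ (es v).erase e := Finset.mem_erase.mpr ⟨h.symm, (f.hes v e').mpr hs⟩
    have hCK := f.CK v ⟨e, he⟩
    set U := Unitization ℂ R with hU
    let c : R → U := fun x => (x : U)
    have hcmul : ∀ x y : R, c (x * y) = c x * c y := fun x y => Unitization.inr_mul ℂ x y
    have hcstar : ∀ x : R, star (c x) = c (star x) := fun x => by
      simp [c, Unitization.inr_star]
    let q : E → U := fun g => c (f.S g * star (f.S g))
    have hqsa : ∀ g, star (q g) = q g := fun g => by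
      simp only [q]; rw [hcstar, f.Q_sa]
    have hqidem : ∀ g, q g * q g = q g := fun g => by
      simp only [q, ← hcmul]; rw [f.Q_idem]
    have hsum0 : ∑ g ∈ (es v).erase e, q g = c (f.P v) - q e := by
      have h6 := Finset.sum_erase_add (es v) q he
      have h2 : ∑ g ∈ es v, q g = c (f.P v) := by
        rw [hCK, show c (∑ g ∈ es v, f.S g * star (f.S g)) =
          ∑ g ∈ es v, c (f.S g * star (f.S g)) from inr_sum _ _]
      rw [h2] at h6
      exact eq_sub_of_add_eq h6
    have hqP : q e * c (f.P v) = q e := by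
      simp only [q, ← hcmul]
      rw [f.Q_mul_P e]
    have hsum : ∑ g ∈ (es v).erase e, (q e * q g * q e) = 0 := by
      calc ∑ g ∈ (es v).erase e, (q e * q g * q e)
          = q e * (∑ g ∈ (es v).erase e, q g) * q e := by
            rw [Finset.mul_sum, Finset.sum_mul]
        _ = q e * (c (f.P v) - q e) * q e := by rw [hsum0]
        _ = (q e * c (f.P v)) * q e - (q e * q e) * q e := by rw [mul_sub, sub_mul]
        _ = 0 := by rw [hqP, hqidem, hqidem]; abel
    have hterm : ∀ g : E, q e * q g * q e = star (q g * q e) * (q g * q e) := by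
      intro g
      rw [star_mul, hqsa, hqsa]
      calc q e * q g * q e = q e * (q g * q g) * q e := by rw [hqidem]
        _ = q e * q g * (q g * q e) := by noncomm_ring
    have hnn : ∀ g ∈ (es v).erase e, (0 : U) ≤ q e * q g * q e := by
      intro g _
      rw [hterm g]
      exact star_mul_self_nonneg _
    have hz := (Finset.sum_eq_zero_iff_of_nonneg hnn).mp hsum e' he'
    rw [hterm e'] at hz
    have hc0 : q e' * q e = 0 := zero_of_star_mul_self _ hz
    have hc1 : q e * q e' = 0 := by
      have := congrArg star hc0
      rwa [star_mul, hqsa, hqsa, star_zero] at this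
    simp only [q, ← hcmul] at hc1
    exact Unitization.inr_injective (by simpa using hc1)
  · -- different sources
    calc (f.S e * star (f.S e)) * (f.S e' * star (f.S e'))
        = ((f.S e * star (f.S e)) * f.P (s e)) * (f.P (s e') * (f.S e' * star (f.S e'))) := by
          rw [f.Q_mul_P e, f.P_mul_Q e']
      _ = (f.S e * star (f.S e)) * (f.P (s e) * f.P (s e')) * (f.S e' * star (f.S e')) := by
          noncomm_ring
      _ = 0 := by rw [f.P_orth _ _ (fun hh => hs hh.symm)]; simp

lemma S_star_orth {e e' : E} (h : e ≠ e') : star (f.S e) * f.S e' = 0 := by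
  have h1 : star (f.S e) = star (f.S e) * (f.S e * star (f.S e)) := by
    have := congrArg star (f.Q_mul_S e)
    rw [star_mul] at this
    conv_lhs => rw [← this]
    rw [f.Q_sa]
  have h2 : f.S e' = (f.S e' * star (f.S e')) * f.S e' := (f.Q_mul_S e').symm
  rw [h1, h2]
  calc star (f.S e) * (f.S e * star (f.S e)) * ((f.S e' * star (f.S e')) * f.S e')
      = star (f.S e) * ((f.S e * star (f.S e)) * (f.S e' * star (f.S e'))) * f.S e' := by
        noncomm_ring
    _ = 0 := by rw [f.Q_orth h]; simp

end CKFamily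
end PartA

section PartB
variable {V E : Type*} {s : E → V} {r : E → V} {es : V → Finset E}
  {R : Type*} [NonUnitalCStarAlgebra R]

/-- The endpoint of a list of edges starting at `v`. -/
def endV (r : E → V) (v : V) : List E → V
  | [] => v
  | e :: l => endV r (r e) l

lemma endV_eq {v w : V} {l : List E} (h : IsPathFrom s r v w l) : endV r v l = w := by
  induction l generalizing v with
  | nil => exact h
  | cons e t ih => exact ih h.2

lemma endV_append (v : V) (l m : List E) : endV r v (l ++ m) = endV r (endV r v l) m := by
  induction l generalizing v with
  | nil => rfl
  | cons e t ih => exact ih (r e)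

lemma isPathFrom_append_s13 {v w x : V} {l m : List E} (h1 : IsPathFrom s r v w l)
    (h2 : IsPathFrom s r w x m) : IsPathFrom s r v x (l ++ m) := by
  induction l generalizing v with
  | nil => rwa [h1]
  | cons e t ih => exact ⟨h1.1, ih h1.2⟩

lemma isPathFrom_decomp {v x : V} {p m : List E} (h : IsPathFrom s r v x (p ++ m)) :
    IsPathFrom s r v (endV r v p) p ∧ IsPathFrom s r (endV r v p) x m := by
  induction p generalizing v with
  | nil => exact ⟨rfl, h⟩
  | cons e t ih =>
    obtain ⟨h1, h2⟩ := h
    obtain ⟨ih1, ih2⟩ := ih h2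
    exact ⟨⟨h1, ih1⟩, ih2⟩

namespace CKFamily

/-- The product of the edge partial isometries along `l`, ending with `P w`. -/
def SP (f : CKFamily V E s r es R) (w : V) : List E → R
  | [] => f.P w
  | e :: l => f.S e * f.SP w l

variable (f : CKFamily V E s r es R)

lemma P_mul_SP {v w : V} {l : List E} (h : IsPathFrom s r v w l) :
    f.P v * f.SP w l = f.SP w l := by
  induction l generalizing v with
  | nil => rw [h]; exact f.P_idem w
  | cons e t ih =>
    show f.P v * (f.S e * f.SP w t) = f.S e * f.SP w t
    rw [← mul_assoc, ← h.1, f.P_mul_S e]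

lemma SP_mul_P (w : V) (l : List E) : f.SP w l * f.P w = f.SP w l := by
  induction l with
  | nil => exact f.P_idem w
  | cons e t ih => show f.S e * f.SP w t * f.P w = _; rw [mul_assoc, ih]; rfl

lemma star_SP_mul_SP {v w : V} {l : List E} (h : IsPathFrom s r v w l) :
    star (f.SP w l) * f.SP w l = f.P w := by
  induction l generalizing v with
  | nil => show star (f.P w) * f.P w = f.P w; rw [f.P_sa, f.P_idem]
  | cons e t ih =>
    show star (f.S e * f.SP w t) * (f.S e * f.SP w t) = f.P w
    rw [star_mul]
    calc star (f.SP w t) * star (f.S e) * (f.S e * f.SP w t)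
        = star (f.SP w t) * ((star (f.S e) * f.S e) * f.SP w t) := by noncomm_ring
      _ = star (f.SP w t) * f.SP w t := by rw [f.S_star e, f.P_mul_SP h.2]
      _ = f.P w := ih h.2

lemma SP_append {w x : V} {m : List E} (h2 : IsPathFrom s r w x m) (l : List E) :
    f.SP x (l ++ m) = f.SP w l * f.SP x m := by
  induction l with
  | nil => show f.SP x m = f.P w * f.SP x m; rw [f.P_mul_SP h2]
  | cons e t ih =>
    show f.S e * f.SP x (t ++ m) = f.S e * f.SP w t * f.SP x m
    rw [ih, mul_assoc]

lemma SP_diverge {e e' : E} (hne : e ≠ e') : ∀ (a : List E) {v w₁ w₂ : V} (l₁ l₂ : List E),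
    IsPathFrom s r v w₂ (a ++ e' :: l₂) →
    star (f.SP w₁ (a ++ e :: l₁)) * f.SP w₂ (a ++ e' :: l₂) = 0 := by
  intro a
  induction a with
  | nil =>
    intro v w₁ w₂ l₁ l₂ _
    show star (f.S e * f.SP w₁ l₁) * (f.S e' * f.SP w₂ l₂) = 0
    rw [star_mul]
    calc star (f.SP w₁ l₁) * star (f.S e) * (f.S e' * f.SP w₂ l₂)
        = star (f.SP w₁ l₁) * (star (f.S e) * f.S e') * f.SP w₂ l₂ := by noncomm_ring
      _ = 0 := by rw [f.S_star_orth hne]; simp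
  | cons g t ih =>
    intro v w₁ w₂ l₁ l₂ h
    show star (f.S g * f.SP w₁ (t ++ e :: l₁)) * (f.S g * f.SP w₂ (t ++ e' :: l₂)) = 0
    rw [star_mul]
    calc star (f.SP w₁ (t ++ e :: l₁)) * star (f.S g) * (f.S g * f.SP w₂ (t ++ e' :: l₂))
        = star (f.SP w₁ (t ++ e :: l₁)) * ((star (f.S g) * f.S g) * f.SP w₂ (t ++ e' :: l₂)) := by
          noncomm_ring
      _ = star (f.SP w₁ (t ++ e :: l₁)) * (f.P (r g) * f.SP w₂ (t ++ e' :: l₂)) := by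
          rw [f.S_star g]
      _ = star (f.SP w₁ (t ++ e :: l₁)) * f.SP w₂ (t ++ e' :: l₂) := by
          have hh : f.P (r g) * f.SP w₂ (t ++ e' :: l₂) = f.SP w₂ (t ++ e' :: l₂) :=
            f.P_mul_SP h.2
          rw [hh]
      _ = 0 := ih l₁ l₂ h.2

end CKFamily

/-- the finset of length-`n` paths emanating from `v`. -/
def Pths (r : E → V) (es : V → Finset E) [DecidableEq E] : ℕ → V → Finset (List E)
  | 0, _ => {[]}
  | n+1, v => (es v).biUnion fun e => ((Pths r es n (r e)).image (fun l => e :: l))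

lemma mem_Pths [DecidableEq E] (hes : ∀ v e, e ∈ es v ↔ s e = v) :
    ∀ {n : ℕ} {v : V} {l : List E},
    l ∈ Pths r es n v ↔ (l.length = n ∧ IsPathFrom s r v (endV r v l) l) := by
  intro n
  induction n with
  | zero =>
    intro v l
    constructor
    · intro h
      rcases Finset.mem_singleton.mp h with rfl
      exact ⟨rfl, rfl⟩
    · rintro ⟨h1, -⟩
      exact Finset.mem_singleton.mpr (List.length_eq_zero_iff.mp h1)
  | succ n ih =>
    intro v l
    constructor
    · intro h
      rcases Finset.mem_biUnion.mp h with ⟨e, he, hl⟩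
      rcases Finset.mem_image.mp hl with ⟨t, ht, rfl⟩
      rcases (ih (v := r e) (l := t)).mp ht with ⟨h1, h2⟩
      exact ⟨by simp [h1], ⟨(hes v e).mp he, h2⟩⟩
    · rintro ⟨h1, h2⟩
      rcases l with _ | ⟨e, t⟩
      · simp at h1
      · refine Finset.mem_biUnion.mpr ⟨e, (hes v e).mpr h2.1, Finset.mem_image.mpr ⟨t, ?_, rfl⟩⟩
        exact (ih (v := r e) (l := t)).mpr ⟨by simpa using h1, h2.2⟩

namespace CKFamily

lemma sum_corners [DecidableEq E] (f : CKFamily V E s r es R)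
    (hnosink : ∀ v : V, (es v).Nonempty) :
    ∀ (n : ℕ) (v : V), ∑ l ∈ Pths r es n v,
      f.SP (endV r v l) l * star (f.SP (endV r v l) l) = f.P v := by
  intro n
  induction n with
  | zero =>
    intro v
    rw [show Pths r es 0 v = {[]} from rfl, Finset.sum_singleton]
    show f.P v * star (f.P v) = f.P v
    rw [f.P_sa, f.P_idem]
  | succ n ih =>
    intro v
    rw [show Pths r es (n+1) v
      = (es v).biUnion (fun e => ((Pths r es n (r e)).image (fun l => e :: l))) from rfl]
    rw [Finset.sum_biUnion ?hdisj]
    case hdisj =>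
      intro e _ e' _ hne
      simp only [Function.onFun]
      rw [Finset.disjoint_left]
      intro l hl hl'
      rcases Finset.mem_image.mp hl with ⟨t, _, rfl⟩
      rcases Finset.mem_image.mp hl' with ⟨t', _, h⟩
      exact hne (List.cons.injEq .. ▸ h).1.symm
    have hinner : ∀ e ∈ es v, ∑ l ∈ (Pths r es n (r e)).image (fun l => e :: l),
        f.SP (endV r v l) l * star (f.SP (endV r v l) l) = f.S e * star (f.S e) := by
      intro e _
      rw [Finset.sum_image (by intro a _ b _ h; exact (List.cons.injEq .. ▸ h).2)]
      have : ∀ t ∈ Pths r es n (r e),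
          f.SP (endV r v (e :: t)) (e :: t) * star (f.SP (endV r v (e :: t)) (e :: t))
          = f.S e * (f.SP (endV r (r e) t) t * star (f.SP (endV r (r e) t) t)) * star (f.S e) := by
        intro t _
        show f.S e * f.SP (endV r (r e) t) t * star (f.S e * f.SP (endV r (r e) t) t) = _
        rw [star_mul]; noncomm_ring
      rw [Finset.sum_congr rfl this, ← Finset.sum_mul, ← Finset.mul_sum, ih (r e), f.S_mul_P e]
    rw [Finset.sum_congr rfl hinner, (f.CK v (hnosink v)).symm]

lemma list_diverge : ∀ {l₁ l₂ : List E}, l₁.length = l₂.length → l₁ ≠ l₂ →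
    ∃ (a : List E) (e e' : E) (t₁ t₂ : List E),
      e ≠ e' ∧ l₁ = a ++ e :: t₁ ∧ l₂ = a ++ e' :: t₂ := by
  intro l₁
  induction l₁ with
  | nil =>
    intro l₂ h1 h2
    rcases l₂ with _ | _
    · exact absurd rfl h2
    · simp at h1
  | cons x xs ih =>
    intro l₂ h1 h2
    rcases l₂ with _ | ⟨y, ys⟩
    · simp at h1
    · by_cases hxy : x = y
      · subst hxy
        have hne : xs ≠ ys := fun h => h2 (by rw [h])
        obtain ⟨a, e, e', t₁, t₂, hee, ha1, ha2⟩ := ih (by simpa using h1) hne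
        exact ⟨x :: a, e, e', t₁, t₂, hee, by simp [ha1], by simp [ha2]⟩
      · exact ⟨[], x, y, xs, ys, hxy, rfl, rfl⟩

lemma SP_orth_of_ne [DecidableEq E] (f : CKFamily V E s r es R)
    (hes : ∀ v e, e ∈ es v ↔ s e = v) {n : ℕ} {v : V} {l₁ l₂ : List E}
    (h1 : l₁ ∈ Pths r es n v) (h2 : l₂ ∈ Pths r es n v) (hne : l₁ ≠ l₂) :
    star (f.SP (endV r v l₁) l₁) * f.SP (endV r v l₂) l₂ = 0 := by
  obtain ⟨len1, path1⟩ := (mem_Pths hes).mp h1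
  obtain ⟨len2, path2⟩ := (mem_Pths hes).mp h2
  obtain ⟨a, e, e', t₁, t₂, hee, rfl, rfl⟩ := list_diverge (len1.trans len2.symm) hne
  exact f.SP_diverge hee a t₁ t₂ path2

end CKFamily
end PartB

section PartC
variable {V E : Type*} {s : E → V} {r : E → V} {es : V → Finset E}

/-- reachability in the graph -/
def Reach (s r : E → V) (u w : V) : Prop := ∃ l, IsPathFrom s r u w l

lemma Reach.refl (u : V) : Reach s r u u := ⟨[], rfl⟩

lemma Reach.trans {u w x : V} (h1 : Reach s r u w) (h2 : Reach s r w x) : Reach s r u x := by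
  obtain ⟨l1, h1⟩ := h1
  obtain ⟨l2, h2⟩ := h2
  exact ⟨l1 ++ l2, isPathFrom_append_s13 h1 h2⟩

variable (hes : ∀ v e, e ∈ es v ↔ s e = v)
variable (hconn : ∀ H : Set V, Hereditary s r H → Saturated s r es H →
      ∀ v : V, v ∉ H →
        ∃ (w : V) (l : List E), IsPathFrom s r v w l ∧
          (∀ e ∈ l, s e ∉ H ∧ r e ∉ H) ∧ w ∉ H ∧
          ∃ lc : List E, lc ≠ [] ∧ IsPathFrom s r w w lc ∧
            (∀ e ∈ lc, s e ∉ H ∧ r e ∉ H) ∧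
            ∃ e ∈ lc, ∃ e' : E, s e' = s e ∧ e' ≠ e ∧ r e' ∉ H)

include hes hconn in
/-- every vertex on a cycle admits two divergent cycles -/
lemma double_cycle {x : V} (hc : ∃ c, c ≠ [] ∧ IsPathFrom s r x x c) :
    ∃ (a t₁ t₂ : List E) (e e' : E), e ≠ e' ∧
      IsPathFrom s r x x (a ++ e :: t₁) ∧ IsPathFrom s r x x (a ++ e' :: t₂) := by
  classical
  obtain ⟨c, hcne, hcp⟩ := hc
  set N : Set V := {u | ¬ Reach s r u x} with hN
  have her : Hereditary s r N := by
    intro e hse hre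
    rcases not_not.mp (fun h => h hre) with ⟨l, hl⟩
    exact hse ⟨e :: l, rfl, hl⟩
  have hsat : Saturated s r es N := by
    intro y _ hall
    intro hreach
    rcases hreach with ⟨l, hl⟩
    rcases l with _ | ⟨e, t⟩
    · -- y = x
      rcases c with _ | ⟨e₀, c'⟩
      · exact hcne rfl
      · have he₀ : e₀ ∈ es y := (hes y e₀).mpr (hcp.1.trans hl.symm)
        exact hall e₀ he₀ ⟨c', hcp.2⟩
    · have he : e ∈ es y := (hes y e).mpr hl.1
      exact hall e he ⟨t, hl.2⟩
  have hx : x ∉ N := fun h => h (Reach.refl x)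
  obtain ⟨w, l, hlp, _, _, lc, hlcne, hlcp, hlcedges, e, helc, e', hse', hne, hre'⟩ :=
    hconn N her hsat x hx
  obtain ⟨lc₁, lc₂, rfl⟩ := List.append_of_mem helc
  obtain ⟨hd1, hd2⟩ := isPathFrom_decomp hlcp
  -- hd2 : IsPathFrom s r (endV r w lc₁) w (e :: lc₂)
  obtain ⟨q₁, hq₁⟩ := not_not.mp (hlcedges e helc).2
  obtain ⟨q₂, hq₂⟩ := not_not.mp hre'
  refine ⟨l ++ lc₁, q₁, q₂, e, e', Ne.symm hne, ?_, ?_⟩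
  · have h1 : IsPathFrom s r (endV r w lc₁) x (e :: q₁) := ⟨hd2.1, hq₁⟩
    have := isPathFrom_append_s13 (isPathFrom_append_s13 hlp hd1) h1
    simpa using this
  · have h2 : IsPathFrom s r (endV r w lc₁) x (e' :: q₂) := ⟨hse'.trans hd2.1, hq₂⟩
    have := isPathFrom_append_s13 (isPathFrom_append_s13 hlp hd1) h2
    simpa using this

/-- walking along a cycle: paths of every length ending at a cycle vertex that reaches back -/
lemma cycle_walk : ∀ (m : ℕ) (x : V) (c : List E), c ≠ [] → IsPathFrom s r x x c →
    ∃ (p : List E) (g : V), p.length = m ∧ IsPathFrom s r x g p ∧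
      (∃ d, d ≠ [] ∧ IsPathFrom s r g g d) ∧ Reach s r g x := by
  intro m
  induction m with
  | zero => exact fun x c hc hcp => ⟨[], x, rfl, rfl, ⟨c, hc, hcp⟩, Reach.refl x⟩
  | succ m ih =>
    intro x c hc hcp
    rcases c with _ | ⟨e, c'⟩
    · exact absurd rfl hc
    · have hrot : IsPathFrom s r (r e) (r e) (c' ++ [e]) :=
        isPathFrom_append_s13 hcp.2 ⟨hcp.1, rfl⟩
      obtain ⟨p, g, hlen, hpath, hcyc, hreach⟩ := ih (r e) (c' ++ [e]) (by simp) hrot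
      exact ⟨e :: p, g, by simp [hlen], ⟨hcp.1, hpath⟩, hcyc,
        hreach.trans ⟨c', hcp.2⟩⟩

include hes hconn in
/-- THE key combinatorial lemma: deep enough path endpoints are reachable from
cycles reachable from `v`. -/
lemma claim_star [DecidableEq E] (v : V) :
    ∃ n : ℕ, ∀ l ∈ Pths r es n v, ∃ x : V,
      (∃ π₁, IsPathFrom s r v x π₁ ∧ π₁.length ≤ n) ∧
      (∃ c, c ≠ [] ∧ IsPathFrom s r x x c) ∧ Reach s r x (endV r v l) := by
  classical
  by_contra hcon
  push_neg at hcon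
  -- for every n there is a bad path of length n
  have hbad : ∀ n : ℕ, ∃ l, (l ∈ Pths r es n v ∧ ∀ x : V,
      (∃ π₁, IsPathFrom s r v x π₁ ∧ π₁.length ≤ n) →
      (∃ c, c ≠ [] ∧ IsPathFrom s r x x c) → ¬ Reach s r x (endV r v l)) := by
    intro n
    obtain ⟨l, hl, hv⟩ := hcon n
    refine ⟨l, hl, fun x h1 h2 h3 => ?_⟩
    exact (hv x h1 h2) h3
  set S : List E → Set ℕ := fun p => {n | ∃ l, ((l ∈ Pths r es n v ∧ ∀ x : V,
      (∃ π₁, IsPathFrom s r v x π₁ ∧ π₁.length ≤ n) →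
      (∃ c, c ≠ [] ∧ IsPathFrom s r x x c) → ¬ Reach s r x (endV r v l)) ∧ p <+: l)} with hS
  have h0 : (S []).Infinite := by
    have hsub : (Set.univ : Set ℕ) ⊆ S [] := by
      intro n _
      obtain ⟨l, hl⟩ := hbad n
      exact ⟨l, hl, List.nil_prefix⟩
    exact Set.infinite_univ.mono hsub
  have hstep : ∀ p : List E, (S p).Infinite →
      ∃ e, s e = endV r v p ∧ (S (p ++ [e])).Infinite := by
    intro p hp
    by_contra hno
    push_neg at hno
    apply hp
    have hsub : S p ⊆ (↑(Finset.range (p.length + 1)) : Set ℕ) ∪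
        ⋃ e ∈ es (endV r v p), S (p ++ [e]) := by
      intro n hn
      obtain ⟨l, ⟨⟨hlP, hlV⟩, hpre⟩⟩ := hn
      by_cases hlen : n ≤ p.length
      · left; simp [Finset.mem_range]; omega
      · right
        obtain ⟨t, rfl⟩ := hpre
        have hlen' : t ≠ [] := by
          intro h
          subst h
          obtain ⟨hL, -⟩ := (mem_Pths hes).mp hlP
          simp at hL; omega
        rcases t with _ | ⟨e, t'⟩
        · exact absurd rfl hlen'
        · obtain ⟨hL, hPath⟩ := (mem_Pths hes).mp hlP
          obtain ⟨hd1, hd2⟩ := isPathFrom_decomp hPath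
          have hse : s e = endV r v p := hd2.1
          refine Set.mem_biUnion ((hes _ e).mpr hse) ?_
          exact ⟨p ++ e :: t', ⟨hlP, hlV⟩, ⟨t', by simp⟩⟩
    apply Set.Finite.subset _ hsub
    apply Set.Finite.union (Finset.finite_toSet _)
    apply Set.Finite.biUnion (Finset.finite_toSet _)
    intro e he
    have : ¬ (S (p ++ [e])).Infinite := Set.not_infinite.mpr (hno e ((hes _ e).mp he))
    exact Set.not_infinite.mp this
  -- construct the bad ray
  let T := {p : List E // (S p).Infinite}
  let next : T → T := fun q =>
    ⟨q.1 ++ [Classical.choose (hstep q.1 q.2)], (Classical.choose_spec (hstep q.1 q.2)).2⟩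
  let ray : ℕ → T := fun n => next^[n] ⟨[], h0⟩
  let c : ℕ → V := fun j => endV r v (ray j).1
  have hray_succ : ∀ j, ray (j + 1) = next (ray j) := fun j =>
    Function.iterate_succ_apply' next j _
  have hray0 : (ray 0).1 = [] := rfl
  have hedge : ∀ j, ∃ e, s e = c j ∧ r e = c (j + 1) ∧ e ∈ es (c j) := by
    intro j
    refine ⟨Classical.choose (hstep (ray j).1 (ray j).2), ?_, ?_, ?_⟩
    · exact (Classical.choose_spec (hstep (ray j).1 (ray j).2)).1
    · show _ = endV r v (ray (j+1)).1
      rw [hray_succ j]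
      show _ = endV r v ((ray j).1 ++ [_])
      rw [endV_append]
      rfl
    · exact (hes _ _).mpr (Classical.choose_spec (hstep (ray j).1 (ray j).2)).1
  -- no cycle vertex reachable from v reaches the ray
  have hray_avoid : ∀ (j : ℕ) (x : V), Reach s r v x →
      (∃ c', c' ≠ [] ∧ IsPathFrom s r x x c') → ¬ Reach s r x (c j) := by
    rintro j x ⟨π, hπ⟩ hcyc hreach
    obtain ⟨n, hn_mem, hn_ge⟩ : ∃ n ∈ S (ray j).1, π.length ≤ n := by
      by_contra hh
      push_neg at hh
      apply (ray j).2
      apply Set.Finite.subset (Finset.finite_toSet (Finset.range (π.length)))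
      intro n hn
      simp only [Finset.coe_range, Set.mem_Iio]
      exact hh n hn
    obtain ⟨l, ⟨⟨hlP, hlV⟩, hpre⟩⟩ := hn_mem
    apply hlV x ⟨π, hπ, hn_ge⟩ hcyc
    obtain ⟨t, rfl⟩ := hpre
    obtain ⟨-, hPath⟩ := (mem_Pths hes).mp hlP
    obtain ⟨-, hd2⟩ := isPathFrom_decomp hPath
    exact hreach.trans ⟨t, hd2⟩
  set H : Set V := {u | ∀ j, ¬ Reach s r u (c j)} with hH
  have her : Hereditary s r H := by
    intro e hse j hre
    rcases hre with ⟨l, hl⟩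
    exact hse j ⟨e :: l, rfl, hl⟩
  have hsat : Saturated s r es H := by
    intro y _ hall j hreach
    rcases hreach with ⟨l, hl⟩
    rcases l with _ | ⟨e, t⟩
    · -- y = c j
      obtain ⟨ej, hej1, hej2, hej3⟩ := hedge j
      have : ej ∈ es y := by rw [hl]; exact hej3
      exact hall ej this (j + 1) (by rw [hej2]; exact Reach.refl _)
    · have he : e ∈ es y := (hes y e).mpr hl.1
      exact hall e he j ⟨t, hl.2⟩
  have hv : v ∉ H := by
    intro h
    exact h 0 (by show Reach s r v (endV r v (ray 0).1); rw [hray0]; exact Reach.refl v)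
  obtain ⟨w, l, hlp, _, hw, lc, hlcne, hlcp, _⟩ := hconn H her hsat v hv
  rw [hH] at hw
  simp only [Set.mem_setOf_eq, not_forall, not_not] at hw
  obtain ⟨j, hwj⟩ := hw
  exact hray_avoid j w ⟨l, hlp⟩ ⟨lc, hlcne, hlcp⟩ hwj

end PartC

section PartD
variable {R : Type*} [NonUnitalCStarAlgebra R]

/-- "properly infinite" witnessed by two exact isometries with orthogonal ranges -/
def PInf (p : R) : Prop := ∃ t₁ t₂ : R, star t₁ * t₁ = p ∧ star t₂ * t₂ = p ∧
  star t₁ * t₂ = 0 ∧ p * t₁ = t₁ ∧ p * t₂ = t₂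

lemma PInf.transport {p q w : R} (hp : p * p = p) (hw1 : star w * w = p)
    (hw2 : w * star w = q) (hq : PInf q) : PInf p := by
  obtain ⟨t₁, t₂, h1, h2, h12, hq1, hq2⟩ := hq
  have key : ∀ t u : R, q * u = u →
      star (star w * t * w) * (star w * u * w) = star w * (star t * u) * w := by
    intro t u hu
    calc star (star w * t * w) * (star w * u * w)
        = star w * star t * ((w * star w) * u) * w := by
          simp only [star_mul, star_star]; noncomm_ring
      _ = star w * star t * (q * u) * w := by rw [hw2]
      _ = star w * (star t * u) * w := by rw [hu]; noncomm_ring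
  have hq' : star w * q * w = p := by
    calc star w * q * w = star w * (w * star w) * w := by rw [hw2]
      _ = (star w * w) * (star w * w) := by noncomm_ring
      _ = p := by rw [hw1, hp]
  have hfix : ∀ t : R, q * t = t → p * (star w * t * w) = star w * t * w := by
    intro t ht
    calc p * (star w * t * w) = star w * ((w * star w) * t) * w := by
          rw [← hw1]; noncomm_ring
      _ = star w * (q * t) * w := by rw [hw2]
      _ = star w * t * w := by rw [ht]
  refine ⟨star w * t₁ * w, star w * t₂ * w, ?_, ?_, ?_, hfix t₁ hq1, hfix t₂ hq2⟩
  · rw [key t₁ t₁ hq1, h1, hq']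
  · rw [key t₂ t₂ hq2, h2, hq']
  · rw [key t₁ t₂ hq2, h12]; simp

/-- a properly infinite projection contains infinitely many orthogonal copies of itself -/
lemma PInf.family {q : R} (hq : PInf q) : ∃ w : ℕ → R,
    (∀ i, star (w i) * w i = q) ∧ (∀ i j, i ≠ j → star (w i) * w j = 0) ∧
    (∀ i, q * w i = w i) := by
  obtain ⟨t₁, t₂, h1, h2, h12, hq1, hq2⟩ := hq
  let w : ℕ → R := fun i => Nat.rec t₁ (fun _ x => t₂ * x) i
  have hws : ∀ i, w (i + 1) = t₂ * w i := fun i => rfl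
  have hfix : ∀ i, q * w i = w i := by
    intro i
    induction i with
    | zero => exact hq1
    | succ i ih => rw [hws, ← mul_assoc, hq2]
  have hiso : ∀ i, star (w i) * w i = q := by
    intro i
    induction i with
    | zero => exact h1
    | succ i ih =>
      rw [hws, star_mul]
      calc star (w i) * star t₂ * (t₂ * w i)
          = star (w i) * ((star t₂ * t₂) * w i) := by noncomm_ring
        _ = star (w i) * w i := by rw [h2, hfix]
        _ = q := ih
  have hkey : ∀ d, star t₁ * w (d + 1) = 0 := by
    intro d
    rw [hws d]
    calc star t₁ * (t₂ * w d) = (star t₁ * t₂) * w d := by noncomm_ring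
      _ = 0 := by rw [h12]; simp
  have horth' : ∀ d i, star (w i) * w (i + d + 1) = 0 := by
    intro d i
    induction i with
    | zero => simpa [show w 0 = t₁ from rfl] using hkey d
    | succ i ih =>
      have e1 : i + 1 + d + 1 = (i + d + 1) + 1 := by omega
      rw [e1, hws i, hws (i + d + 1), star_mul]
      calc star (w i) * star t₂ * (t₂ * w (i + d + 1))
          = star (w i) * ((star t₂ * t₂) * w (i + d + 1)) := by noncomm_ring
        _ = star (w i) * w (i + d + 1) := by rw [h2, hfix (i + d + 1)]
        _ = 0 := ih
  refine ⟨w, hiso, ?_, hfix⟩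
  intro i j hij
  rcases Nat.lt_or_ge i j with h | h
  · obtain ⟨d, rfl⟩ : ∃ d, j = i + d + 1 := ⟨j - i - 1, by omega⟩
    exact horth' d i
  · have hj : i ≠ j := hij
    have : j < i := lt_of_le_of_ne h (Ne.symm hij)
    obtain ⟨d, rfl⟩ : ∃ d, i = j + d + 1 := ⟨i - j - 1, by omega⟩
    have := horth' d j
    have h0 := congrArg star this
    rwa [star_mul, star_star, star_zero] at h0

lemma cuntzSub_of_PInf {p : R} (h : PInf p) :
    CuntzSub (Matrix.diagonal ![p, p] : Matrix (Fin 2) (Fin 2) R)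
      (Matrix.diagonal ![p, 0]) := by
  obtain ⟨t₁, t₂, h1, h2, h12, hp1, hp2⟩ := h
  have h21 : star t₂ * t₁ = 0 := by
    have := congrArg star h12
    rwa [star_mul, star_star, star_zero] at this
  have k1 : star t₁ * (p * t₁) = p := by rw [hp1, h1]
  have k2 : star t₂ * (p * t₂) = p := by rw [hp2, h2]
  have k12 : star t₁ * (p * t₂) = 0 := by rw [hp2, h12]
  have k21 : star t₂ * (p * t₁) = 0 := by rw [hp1, h21]
  set M : Matrix (Fin 2) (Fin 2) R := Matrix.of ![![star t₁, 0], ![star t₂, 0]] with hM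
  refine ⟨fun _ => M, ?_⟩
  have key : M * Matrix.diagonal ![p, 0] * star M = Matrix.diagonal ![p, p] := by
    have hMd : M * Matrix.diagonal ![p, 0] = Matrix.of ![![star t₁ * p, 0], ![star t₂ * p, 0]] := by
      ext i j
      rw [Matrix.mul_diagonal]
      fin_cases i <;> fin_cases j <;> simp [hM]
    rw [hMd]
    ext i j
    rw [Matrix.mul_apply]
    rw [Fin.sum_univ_two]
    fin_cases i <;> fin_cases j <;>
      simp [hM, Matrix.star_apply, star_star, Matrix.diagonal, mul_assoc, k1, k2, k12, k21]
  simp only [key]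
  exact tendsto_const_nhds

end PartD

section Main
variable {V E : Type*} {s : E → V} {r : E → V} {es : V → Finset E}
  {R : Type*} [NonUnitalCStarAlgebra R]

theorem stmt13' [Countable V] [Countable E]
    (hnosink : ∀ v : V, (es v).Nonempty)
    (f : GraphCStarAlgebra V E s r es R)
    (hconn : ∀ H : Set V, Hereditary s r H → Saturated s r es H →
      ∀ v : V, v ∉ H →
        ∃ (w : V) (l : List E), IsPathFrom s r v w l ∧
          (∀ e ∈ l, s e ∉ H ∧ r e ∉ H) ∧ w ∉ H ∧
          ∃ lc : List E, lc ≠ [] ∧ IsPathFrom s r w w lc ∧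
            (∀ e ∈ lc, s e ∉ H ∧ r e ∉ H) ∧
            ∃ e ∈ lc, ∃ e' : E, s e' = s e ∧ e' ≠ e ∧ r e' ∉ H) :
    ∀ v : V, PInf ((f.toCKFamily).P v) := by
  classical
  intro v
  set F := f.toCKFamily with hF
  obtain ⟨n, hn⟩ := claim_star F.hes hconn v
  set A : Finset (List E) := Pths r es n v with hA
  set C : List E → R := fun l => F.SP (endV r v l) l * star (F.SP (endV r v l) l) with hC
  have hpathA : ∀ l ∈ A, l.length = n ∧ IsPathFrom s r v (endV r v l) l :=
    fun l hl => (mem_Pths F.hes).mp hl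
  have hCsum : ∑ l ∈ A, C l = F.P v := F.sum_corners hnosink n v
  have hCsa : ∀ l, star (C l) = C l := fun l => by
    simp only [hC]; rw [star_mul, star_star]
  have hCP : ∀ l ∈ A, F.P v * C l = C l := by
    intro l hl
    simp only [hC]
    rw [← mul_assoc, F.P_mul_SP (hpathA l hl).2]
  have hCidem : ∀ l ∈ A, C l * C l = C l := by
    intro l hl
    simp only [hC]
    calc F.SP (endV r v l) l * star (F.SP (endV r v l) l) *
          (F.SP (endV r v l) l * star (F.SP (endV r v l) l))
        = F.SP (endV r v l) l * (star (F.SP (endV r v l) l) * F.SP (endV r v l) l) *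
          star (F.SP (endV r v l) l) := by noncomm_ring
      _ = F.SP (endV r v l) l * F.P (endV r v l) * star (F.SP (endV r v l) l) := by
          rw [F.star_SP_mul_SP (hpathA l hl).2]
      _ = F.SP (endV r v l) l * star (F.SP (endV r v l) l) := by rw [F.SP_mul_P]
  have hCorth : ∀ l ∈ A, ∀ m ∈ A, l ≠ m → C l * C m = 0 := by
    intro l hl m hm hne
    simp only [hC]
    calc F.SP (endV r v l) l * star (F.SP (endV r v l) l) *
          (F.SP (endV r v m) m * star (F.SP (endV r v m) m))
        = F.SP (endV r v l) l * (star (F.SP (endV r v l) l) * F.SP (endV r v m) m) *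
          star (F.SP (endV r v m) m) := by noncomm_ring
      _ = 0 := by rw [F.SP_orth_of_ne F.hes hl hm hne]; simp
  -- absorber data
  have key : ∀ l : List E, ∃ m : List E, l ∈ A → (m ∈ A ∧
      (∃ dd, dd ≠ [] ∧ IsPathFrom s r (endV r v m) (endV r v m) dd) ∧
      Reach s r (endV r v m) (endV r v l)) := by
    intro l
    by_cases hl : l ∈ A
    · obtain ⟨x, ⟨π₁, hπ, hπlen⟩, ⟨cc, hccne, hccp⟩, hreach⟩ := hn l hl
      obtain ⟨p, g, hplen, hppath, hgcyc, hgreach⟩ := cycle_walk (n - π₁.length) x cc hccne hccp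
      have hfull : IsPathFrom s r v g (π₁ ++ p) := isPathFrom_append_s13 hπ hppath
      have hend : endV r v (π₁ ++ p) = g := endV_eq hfull
      have hlen : (π₁ ++ p).length = n := by simp [hplen]; omega
      refine ⟨π₁ ++ p, fun _ => ⟨?_, ?_, ?_⟩⟩
      · exact (mem_Pths F.hes).mpr ⟨hlen, by rw [hend]; exact hfull⟩
      · rw [hend]; exact hgcyc
      · rw [hend]; exact hgreach.trans hreach
    · exact ⟨[], fun h => absurd h hl⟩
  choose σ hσ using key
  have hσA : ∀ l ∈ A, σ l ∈ A := fun l hl => (hσ l hl).1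
  have key2 : ∀ l : List E, ∃ ρl : List E, l ∈ A →
      IsPathFrom s r (endV r v (σ l)) (endV r v l) ρl := by
    intro l
    by_cases hl : l ∈ A
    · obtain ⟨ρl, hρl⟩ := (hσ l hl).2.2
      exact ⟨ρl, fun _ => hρl⟩
    · exact ⟨[], fun h => absurd h hl⟩
  choose ρ hρ using key2
  -- PInf of absorber corners
  have hPIσ : ∀ l ∈ A, PInf (C (σ l)) := by
    intro l hl
    obtain ⟨a, q1, q2, e, e', hee, hc1, hc2⟩ := double_cycle F.hes hconn (hσ l hl).2.1
    have hPg : PInf (F.P (endV r v (σ l))) :=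
      ⟨F.SP (endV r v (σ l)) (a ++ e :: q1), F.SP (endV r v (σ l)) (a ++ e' :: q2),
        F.star_SP_mul_SP hc1, F.star_SP_mul_SP hc2, F.SP_diverge hee a q1 q2 hc2,
        F.P_mul_SP hc1, F.P_mul_SP hc2⟩
    refine PInf.transport (hCidem _ (hσA l hl)) (w := star (F.SP (endV r v (σ l)) (σ l)))
      ?_ ?_ hPg
    · rw [star_star]
    · rw [star_star]
      exact F.star_SP_mul_SP (hpathA _ (hσA l hl)).2
  -- orthogonal isometry families inside each corner
  set Wfam : List E → ℕ → R := fun m =>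
    if h : PInf (C m) then Classical.choose (PInf.family h) else fun _ => 0 with hWfam
  have hWspec : ∀ m, PInf (C m) →
      (∀ i, star (Wfam m i) * Wfam m i = C m) ∧
      (∀ i j, i ≠ j → star (Wfam m i) * Wfam m j = 0) ∧
      (∀ i, C m * Wfam m i = Wfam m i) := by
    intro m h
    have h2 : Wfam m = Classical.choose (PInf.family h) := by
      simp only [hWfam, dif_pos h]
    rw [h2]
    exact Classical.choose_spec (PInf.family h)
  -- ℕ-encoding of slots
  obtain ⟨enc, henc⟩ := Countable.exists_injective_nat (List E)
  set slot : Fin 2 → {x : List E // x ∈ A} → ℕ := fun k l => 2 * enc l.1 + k.1 with hslotdef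
  have hslot : ∀ k k' l m, slot k l = slot k' m → k = k' ∧ l = m := by
    intro k k' l m h
    simp only [hslotdef] at h
    have hk := k.isLt
    have hk' := k'.isLt
    have h2 : k.1 = k'.1 ∧ enc l.1 = enc m.1 := by omega
    exact ⟨Fin.ext h2.1, Subtype.ext (henc h2.2)⟩
  set τ : {x : List E // x ∈ A} → R := fun l =>
    F.SP (endV r v (σ l.1)) (σ l.1) *
      (F.SP (endV r v l.1) (ρ l.1) * star (F.SP (endV r v l.1) l.1)) with hτdef
  have hτa : ∀ l : {x : List E // x ∈ A}, star (τ l) * τ l = C l.1 := by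
    intro l
    have hXp : IsPathFrom s r v (endV r v (σ l.1)) (σ l.1) := (hpathA _ (hσA l.1 l.2)).2
    have hρp : IsPathFrom s r (endV r v (σ l.1)) (endV r v l.1) (ρ l.1) := hρ l.1 l.2
    simp only [hτdef, hC]
    set X := F.SP (endV r v (σ l.1)) (σ l.1)
    set Y := F.SP (endV r v l.1) (ρ l.1)
    set Z := F.SP (endV r v l.1) l.1
    calc star (X * (Y * star Z)) * (X * (Y * star Z))
        = Z * star Y * ((star X * X) * (Y * star Z)) := by
          simp only [star_mul, star_star]; noncomm_ring
      _ = Z * star Y * (F.P (endV r v (σ l.1)) * Y * star Z) := by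
          rw [F.star_SP_mul_SP hXp]; noncomm_ring
      _ = Z * star Y * (Y * star Z) := by rw [F.P_mul_SP hρp]
      _ = Z * (star Y * Y) * star Z := by noncomm_ring
      _ = Z * F.P (endV r v l.1) * star Z := by rw [F.star_SP_mul_SP hρp]
      _ = Z * star Z := by rw [F.SP_mul_P]
  have hτb : ∀ l : {x : List E // x ∈ A}, C (σ l.1) * τ l = τ l := by
    intro l
    have hXp : IsPathFrom s r v (endV r v (σ l.1)) (σ l.1) := (hpathA _ (hσA l.1 l.2)).2
    have hρp : IsPathFrom s r (endV r v (σ l.1)) (endV r v l.1) (ρ l.1) := hρ l.1 l.2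
    simp only [hτdef, hC]
    set X := F.SP (endV r v (σ l.1)) (σ l.1)
    set Y := F.SP (endV r v l.1) (ρ l.1)
    set Z := F.SP (endV r v l.1) l.1
    calc X * star X * (X * (Y * star Z))
        = X * ((star X * X) * Y) * star Z := by noncomm_ring
      _ = X * (F.P (endV r v (σ l.1)) * Y) * star Z := by rw [F.star_SP_mul_SP hXp]
      _ = X * Y * star Z := by rw [F.P_mul_SP hρp]
      _ = X * (Y * star Z) := by noncomm_ring
  set t : Fin 2 → R := fun k => ∑ l ∈ A.attach, Wfam (σ l.1) (slot k l) * τ l with htdef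
  have hterm : ∀ (k k' : Fin 2) (l m : {x : List E // x ∈ A}),
      star (Wfam (σ l.1) (slot k l) * τ l) * (Wfam (σ m.1) (slot k' m) * τ m)
      = if k = k' ∧ l = m then C l.1 else 0 := by
    intro k k' l m
    have h0 : star (Wfam (σ l.1) (slot k l) * τ l) * (Wfam (σ m.1) (slot k' m) * τ m)
        = star (τ l) * ((star (Wfam (σ l.1) (slot k l)) * Wfam (σ m.1) (slot k' m)) * τ m) := by
      rw [star_mul]; noncomm_ring
    by_cases hkl : k = k' ∧ l = m
    · obtain ⟨rfl, rfl⟩ := hkl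
      rw [if_pos ⟨rfl, rfl⟩, h0, ((hWspec _ (hPIσ l.1 l.2)).1 _), hτb, hτa]
    · rw [if_neg hkl, h0]
      by_cases hab : σ l.1 = σ m.1
      · have hij : slot k l ≠ slot k' m := fun h => hkl ⟨(hslot _ _ _ _ h).1, (hslot _ _ _ _ h).2⟩
        rw [← hab, ((hWspec _ (hPIσ l.1 l.2)).2.1 _ _ hij)]
        simp
      · have h1 : Wfam (σ m.1) (slot k' m) = C (σ m.1) * Wfam (σ m.1) (slot k' m) :=
          ((hWspec _ (hPIσ m.1 m.2)).2.2 _).symm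
        have h2 : star (Wfam (σ l.1) (slot k l))
            = star (Wfam (σ l.1) (slot k l)) * C (σ l.1) := by
          conv_lhs => rw [← (hWspec _ (hPIσ l.1 l.2)).2.2 (slot k l)]
          rw [star_mul, hCsa]
        rw [h2]
        conv_lhs => rw [h1]
        have h3 : star (Wfam (σ l.1) (slot k l)) * C (σ l.1) *
              (C (σ m.1) * Wfam (σ m.1) (slot k' m))
            = star (Wfam (σ l.1) (slot k l)) * (C (σ l.1) * C (σ m.1)) *
              Wfam (σ m.1) (slot k' m) := by noncomm_ring
        rw [h3, hCorth _ (hσA l.1 l.2) _ (hσA m.1 m.2) hab]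
        simp
  have hiso : ∀ k, star (t k) * t k = F.P v := by
    intro k
    simp only [htdef]
    rw [star_sum, Finset.sum_mul_sum]
    calc ∑ l ∈ A.attach, ∑ m ∈ A.attach,
          star (Wfam (σ l.1) (slot k l) * τ l) * (Wfam (σ m.1) (slot k m) * τ m)
        = ∑ l ∈ A.attach, ∑ m ∈ A.attach, (if l = m then C l.1 else 0) := by
          refine Finset.sum_congr rfl fun l _ => Finset.sum_congr rfl fun m _ => ?_
          rw [hterm k k l m]
          simp
      _ = ∑ l ∈ A.attach, C l.1 := by
          refine Finset.sum_congr rfl fun l _ => ?_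
          rw [Finset.sum_ite_eq A.attach l (fun _ => C l.1)]
          simp
      _ = ∑ l ∈ A, C l := Finset.sum_attach A (fun l => C l)
      _ = F.P v := hCsum
  have horth : star (t 0) * t 1 = 0 := by
    simp only [htdef]
    rw [star_sum, Finset.sum_mul_sum]
    refine Finset.sum_eq_zero fun l _ => Finset.sum_eq_zero fun m _ => ?_
    rw [hterm 0 1 l m, if_neg]
    rintro ⟨h01, -⟩
    exact absurd h01 (by decide)
  have hfix : ∀ k, F.P v * t k = t k := by
    intro k
    simp only [htdef]
    rw [Finset.mul_sum]
    refine Finset.sum_congr rfl fun l _ => ?_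
    have hW := (hWspec _ (hPIσ l.1 l.2)).2.2 (slot k l)
    calc F.P v * (Wfam (σ l.1) (slot k l) * τ l)
        = F.P v * ((C (σ l.1) * Wfam (σ l.1) (slot k l)) * τ l) := by rw [hW]
      _ = (F.P v * C (σ l.1)) * (Wfam (σ l.1) (slot k l) * τ l) := by noncomm_ring
      _ = C (σ l.1) * (Wfam (σ l.1) (slot k l) * τ l) := by rw [hCP _ (hσA l.1 l.2)]
      _ = (C (σ l.1) * Wfam (σ l.1) (slot k l)) * τ l := by noncomm_ring
      _ = Wfam (σ l.1) (slot k l) * τ l := by rw [hW]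
  exact ⟨t 0, t 1, hiso 0, hiso 1, horth, hfix 0, hfix 1⟩

end Main

/-- let `E` be a locally finite directed graph with no sinks
such that in every subgraph complementary to a hereditary saturated vertex set
`H`, every vertex connects to a cycle with an exit.  Then every vertex
projection `P v ∈ C*(E)` is properly infinite. -/
theorem stmt13 {V E : Type*} [Countable V] [Countable E]
    (s r : E → V) (es : V → Finset E)
    (hrfin : ∀ v : V, {e : E | r e = v}.Finite)
    (hnosink : ∀ v : V, (es v).Nonempty)
    {R : Type*} [NonUnitalCStarAlgebra R]
    (f : GraphCStarAlgebra V E s r es R)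
    (hconn : ∀ H : Set V, Hereditary s r H → Saturated s r es H →
      ∀ v : V, v ∉ H →
        ∃ (w : V) (l : List E), IsPathFrom s r v w l ∧
          (∀ e ∈ l, s e ∉ H ∧ r e ∉ H) ∧ w ∉ H ∧
          ∃ lc : List E, lc ≠ [] ∧ IsPathFrom s r w w lc ∧
            (∀ e ∈ lc, s e ∉ H ∧ r e ∉ H) ∧
            ∃ e ∈ lc, ∃ e' : E, s e' = s e ∧ e' ≠ e ∧ r e' ∉ H) :
    ∀ v : V, ProperlyInfinite (f.P v) := by
  intro v
  refine ⟨f.P_ne v, ?_⟩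
  exact cuntzSub_of_PInf (stmt13' hnosink f hconn v)
end
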